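/- The polynomial I_n admits the holomorphic-component expansion I_n(z,w|ξ) = n! · ∑_{k=0}^{n} (ν^k/k!) · (i^{n−k} α^{(n−k)/2} / (n−k)!) · H_{n−k}( i·α^{1/2}·z + i·ξ/(2α^{1/2}) ) · w^k, where H_m is the physicists' Hermite polynomial and α^{1/2} is a fixed complex square root of α ≠ 0. -/

import Mathlib

open Complex

noncomputable def Ic (ν α ξ z w : ℂ) : ℕ → ℂ
  | 0 => 1
  | 1 => ν * w - 2 * α * z - ξ
  | (n + 2) => (ν * w - 2 * α * z - ξ) * Ic ν α ξ z w (n + 1)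
      + 2 * α * (n + 1) * Ic ν α ξ z w n

noncomputable def Hc : ℕ → ℂ → ℂ
  | 0, _ => 1
  | 1, x => 2 * x
  | (n + 2), x => 2 * x * Hc (n + 1) x - 2 * (n + 1) * Hc n x

noncomputable def cc (s x : ℂ) (m : ℕ) : ℂ :=
  Complex.I ^ m * s ^ m / (m.factorial : ℂ) * Hc m x

noncomputable def Ac (ν w s x : ℂ) (n : ℕ) : ℂ :=
  ∑ k ∈ Finset.range (n + 1), ν ^ k / (k.factorial : ℂ) * cc s x (n - k) * w ^ k

lemma cc_rec (s x : ℂ) (m : ℕ) :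
    ((m : ℂ) + 1) * cc s x (m + 1) =
      2 * Complex.I * s * x * cc s x m +
        2 * s ^ 2 * (if m = 0 then 0 else cc s x (m - 1)) := by
  match m with
  | 0 =>
    simp [cc, Hc]
    ring
  | (j + 1) =>
    have hH : Hc (j + 1 + 1) x = 2 * x * Hc (j + 1) x - 2 * ((j + 1 : ℕ) : ℂ) * Hc j x := by
      rw [Hc]; norm_cast
    simp only [cc, Nat.add_sub_cancel, if_neg (Nat.succ_ne_zero j), hH]
    have hf1 : ((j + 2).factorial : ℂ) = ((j : ℂ) + 2) * ((j + 1).factorial : ℂ) := by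
      rw [Nat.factorial_succ]; push_cast; ring
    have hf2 : ((j + 1).factorial : ℂ) = ((j : ℂ) + 1) * ((j).factorial : ℂ) := by
      rw [Nat.factorial_succ]; push_cast; ring
    have h1 : ((j + 1).factorial : ℂ) ≠ 0 := by exact_mod_cast (Nat.factorial_pos _).ne'
    have h0 : ((j).factorial : ℂ) ≠ 0 := by exact_mod_cast (Nat.factorial_pos _).ne'
    have hI : (Complex.I : ℂ) ^ 2 = -1 := Complex.I_sq
    have hj1 : ((j : ℂ) + 1) ≠ 0 := Nat.cast_add_one_ne_zero j
    have hj2 : ((j : ℂ) + 2) ≠ 0 := by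
      exact_mod_cast Nat.succ_ne_zero (j + 1)
    have hIj2 : Complex.I ^ (j + 2) = -(Complex.I ^ j) := by
      rw [pow_add, Complex.I_sq]; ring
    have hIj1 : Complex.I ^ (j + 1) = Complex.I ^ j * Complex.I := pow_succ _ _
    have hsj2 : s ^ (j + 2) = s ^ j * s ^ 2 := by rw [pow_add]
    have hsj1 : s ^ (j + 1) = s ^ j * s := pow_succ _ _
    rw [show j + 1 + 1 = j + 2 from rfl, hf1, hf2, hIj2, hIj1, hsj2, hsj1]
    field_simp
    ring_nf
    simp only [hI]
    push_cast
    ring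

lemma Ac_rec (ν w s x : ℂ) (n : ℕ) :
    ((n : ℂ) + 2) * Ac ν w s x (n + 2) =
      (ν * w + 2 * Complex.I * s * x) * Ac ν w s x (n + 1) + 2 * s ^ 2 * Ac ν w s x n := by
  have hsplit : ∀ k ∈ Finset.range (n + 3),
      ((n : ℂ) + 2) * (ν ^ k / (k.factorial : ℂ) * cc s x (n + 2 - k) * w ^ k)
        = (k : ℂ) * (ν ^ k / (k.factorial : ℂ) * cc s x (n + 2 - k) * w ^ k)
          + ν ^ k / (k.factorial : ℂ) *
              (((n + 2 - k : ℕ) : ℂ) * cc s x (n + 2 - k)) * w ^ k := by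
    intro k hk
    rw [Finset.mem_range] at hk
    have : ((n + 2 - k : ℕ) : ℂ) = (n : ℂ) + 2 - (k : ℂ) := by
      have : k ≤ n + 2 := by omega
      push_cast [Nat.cast_sub this]
      ring
    rw [this]; ring
  unfold Ac
  rw [Finset.mul_sum, Finset.sum_congr rfl hsplit, Finset.sum_add_distrib]
  -- first sum
  have hS1 : (∑ k ∈ Finset.range (n + 3),
      (k : ℂ) * (ν ^ k / (k.factorial : ℂ) * cc s x (n + 2 - k) * w ^ k))
      = ν * w * ∑ k ∈ Finset.range (n + 2),
          ν ^ k / (k.factorial : ℂ) * cc s x (n + 1 - k) * w ^ k := by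
    rw [Finset.sum_range_succ' _ (n + 2)]
    simp only [Nat.cast_zero, zero_mul, add_zero]
    rw [Finset.mul_sum]
    refine Finset.sum_congr rfl ?_
    intro k hk
    have h1 : ((k + 1).factorial : ℂ) = ((k : ℂ) + 1) * ((k).factorial : ℂ) := by
      rw [Nat.factorial_succ]; push_cast; ring
    have h0 : ((k).factorial : ℂ) ≠ 0 := by exact_mod_cast (Nat.factorial_pos _).ne'
    have h2 : ((k : ℂ) + 1) ≠ 0 := Nat.cast_add_one_ne_zero k
    have : n + 2 - (k + 1) = n + 1 - k := by omega
    rw [this, h1]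
    push_cast
    field_simp
    ring
  -- second sum
  have hS2 : (∑ k ∈ Finset.range (n + 3),
      ν ^ k / (k.factorial : ℂ) * (((n + 2 - k : ℕ) : ℂ) * cc s x (n + 2 - k)) * w ^ k)
      = 2 * Complex.I * s * x * (∑ k ∈ Finset.range (n + 2),
          ν ^ k / (k.factorial : ℂ) * cc s x (n + 1 - k) * w ^ k)
        + 2 * s ^ 2 * ∑ k ∈ Finset.range (n + 1),
            ν ^ k / (k.factorial : ℂ) * cc s x (n - k) * w ^ k := by
    rw [Finset.sum_range_succ]
    have hlast : ((n + 2 - (n + 2) : ℕ) : ℂ) = 0 := by norm_num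
    rw [hlast]
    simp only [zero_mul, mul_zero, add_zero]
    have step : ∀ k ∈ Finset.range (n + 2),
        ν ^ k / (k.factorial : ℂ) * (((n + 2 - k : ℕ) : ℂ) * cc s x (n + 2 - k)) * w ^ k
          = 2 * Complex.I * s * x *
              (ν ^ k / (k.factorial : ℂ) * cc s x (n + 1 - k) * w ^ k)
            + 2 * s ^ 2 *
                (ν ^ k / (k.factorial : ℂ) *
                  (if k = n + 1 then 0 else cc s x (n - k)) * w ^ k) := by
      intro k hk
      rw [Finset.mem_range] at hk
      have hm : n + 2 - k = (n + 1 - k) + 1 := by omega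
      have hcast : ((n + 2 - k : ℕ) : ℂ) = ((n + 1 - k : ℕ) : ℂ) + 1 := by
        rw [hm]; push_cast; ring
      rw [hcast, hm, cc_rec s x (n + 1 - k)]
      have hif : (if n + 1 - k = 0 then (0:ℂ) else cc s x (n + 1 - k - 1))
          = (if k = n + 1 then (0:ℂ) else cc s x (n - k)) := by
        by_cases h : k = n + 1
        · simp [h]
        · have h1 : n + 1 - k ≠ 0 := by omega
          have h2 : n + 1 - k - 1 = n - k := by omega
          rw [if_neg h1, if_neg h, h2]
      rw [hif]
      ring
    rw [Finset.sum_congr rfl step, Finset.sum_add_distrib, ← Finset.mul_sum, ← Finset.mul_sum]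
    congr 1
    rw [Finset.sum_range_succ, if_pos rfl]
    simp only [mul_zero, zero_mul, add_zero]
    congr 1
    refine Finset.sum_congr rfl ?_
    intro k hk
    rw [Finset.mem_range] at hk
    rw [if_neg (by omega : k ≠ n + 1)]
  rw [hS1, hS2]
  simp only [show n + 1 + 1 = n + 2 from rfl]
  ring

theorem stmt17 (ν α ξ z w s : ℂ) (hα : α ≠ 0) (hs : s ^ 2 = α) (n : ℕ) :
    Ic ν α ξ z w n =
      (n.factorial : ℂ) *
        ∑ k ∈ Finset.range (n + 1),
          ν ^ k / (k.factorial : ℂ) *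
            (Complex.I ^ (n - k) * s ^ (n - k) / ((n - k).factorial : ℂ)) *
            Hc (n - k) (Complex.I * s * z + Complex.I * ξ / (2 * s)) * w ^ k := by
  have hs0 : s ≠ 0 := by
    intro h; apply hα; rw [← hs, h]; ring
  set x : ℂ := Complex.I * s * z + Complex.I * ξ / (2 * s) with hx
  have hI1 : ν * w - 2 * α * z - ξ = ν * w + 2 * Complex.I * s * x := by
    rw [hx, ← hs]
    have hI : (Complex.I : ℂ) ^ 2 = -1 := Complex.I_sq
    field_simp
    ring_nf
    linear_combination (-(2 * s ^ 2 * z) - ξ) * hI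
  have key : ∀ m, Ic ν α ξ z w m = (m.factorial : ℂ) * Ac ν w s x m ∧
      Ic ν α ξ z w (m + 1) = ((m + 1).factorial : ℂ) * Ac ν w s x (m + 1) := by
    intro m
    induction m with
    | zero =>
      constructor
      · simp [Ic, Ac, cc, Hc]
      · show Ic ν α ξ z w 1 = _
        rw [show Ic ν α ξ z w 1 = ν * w - 2 * α * z - ξ from rfl, hI1]
        simp [Ac, cc, Hc, Finset.sum_range_succ]
        ring
    | succ j ih =>
      refine ⟨ih.2, ?_⟩
      show Ic ν α ξ z w (j + 2) = _
      rw [Ic, ih.1, ih.2, hI1]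
      have hrec := Ac_rec ν w s x j
      have hf2 : ((j + 2).factorial : ℂ) = ((j : ℂ) + 2) * ((j + 1).factorial : ℂ) := by
        rw [Nat.factorial_succ]; push_cast; ring
      have hf1 : ((j + 1).factorial : ℂ) = ((j : ℂ) + 1) * ((j).factorial : ℂ) := by
        rw [Nat.factorial_succ]; push_cast; ring
      rw [hf2]
      calc (ν * w + 2 * Complex.I * s * x) * (((j + 1).factorial : ℂ) * Ac ν w s x (j + 1))
            + 2 * α * (↑j + 1) * ((j.factorial : ℂ) * Ac ν w s x j)
          = ((j + 1).factorial : ℂ) *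
              ((ν * w + 2 * Complex.I * s * x) * Ac ν w s x (j + 1)
                + 2 * s ^ 2 * Ac ν w s x j) := by
            rw [← hs, hf1]; ring
        _ = ((j + 1).factorial : ℂ) * (((j : ℂ) + 2) * Ac ν w s x (j + 2)) := by rw [hrec]
        _ = ((j : ℂ) + 2) * ((j + 1).factorial : ℂ) * Ac ν w s x (j + 2) := by ring
  have := (key n).1
  rw [this]
  unfold Ac cc
  congr 1
  refine Finset.sum_congr rfl ?_
  intro k _
  ring
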